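/- Let t ∈ ℤ and η ∈ ℂ with η ≠ 0. Let M be the ℂ-vector space with basis {n_k}_{k∈ℕ} and define linear endomorphisms E, F, H of M by E(n_k) = k·n_{k−1} + η·n_k (with n_{−1} := 0), F(n_k) = (t−1−k)·n_{k+1} − η·n_{k+2}, H(n_k) = (t−1−2k)·n_k − 2η·n_{k+1}. Then M has no ℂ-subspace invariant under all of E, F, H other than 0 and M; i.e. the Whittaker module M is irreducible. -/

import Mathlib

/-- For t ∈ ℤ and η ≠ 0, the Whittaker module M (ℂ-vector space
with basis {n_k}_{k∈ℕ}, E(n_k) = k·n_{k−1} + η·n_k, F(n_k) = (t−1−k)·n_{k+1}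
− η·n_{k+2}, H(n_k) = (t−1−2k)·n_k − 2η·n_{k+1}) is irreducible: it has no
invariant subspace other than 0 and M. -/
theorem whittaker_module_irreducible (t : ℤ) (η : ℂ) (hη : η ≠ 0)
    (E F H : (ℕ →₀ ℂ) →ₗ[ℂ] (ℕ →₀ ℂ))
    (n : ℕ → ℕ →₀ ℂ) (hn : ∀ k, n k = Finsupp.single k 1)
    (hE0 : E (n 0) = η • n 0)
    (hE : ∀ k : ℕ, E (n (k + 1)) = ((k : ℂ) + 1) • n k + η • n (k + 1))
    (hF : ∀ k : ℕ, F (n k) = ((t : ℂ) - 1 - k) • n (k + 1) - η • n (k + 2))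
    (hH : ∀ k : ℕ, H (n k) = ((t : ℂ) - 1 - 2 * k) • n k - (2 * η) • n (k + 1)) :
    ∀ W : Submodule ℂ (ℕ →₀ ℂ),
      (∀ v ∈ W, E v ∈ W) → (∀ v ∈ W, F v ∈ W) → (∀ v ∈ W, H v ∈ W) →
      W = ⊥ ∨ W = ⊤ := by
  intro W hEW hFW hHW
  by_cases hbot : W = ⊥
  · exact Or.inl hbot
  right
  -- lowering operator L = E - η • id
  set L : (ℕ →₀ ℂ) →ₗ[ℂ] (ℕ →₀ ℂ) := E - η • LinearMap.id with hL
  have hLW : ∀ v ∈ W, L v ∈ W := by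
    intro v hv
    simpa [hL] using W.sub_mem (hEW v hv) (W.smul_mem η hv)
  -- L on basis vectors
  have hLn0 : L (n 0) = 0 := by
    simp [hL, hE0]
  have hLn : ∀ k : ℕ, L (n (k + 1)) = ((k : ℂ) + 1) • n k := by
    intro k
    simp [hL, hE k]
  -- coefficient formula for L
  have hLcoe : ∀ (v : ℕ →₀ ℂ) (j : ℕ), (L v) j = ((j : ℂ) + 1) * v (j + 1) := by
    intro v
    induction v using Finsupp.induction with
    | zero => simp
    | single_add a b f ha0 hb ih =>
      intro j
      have hsingle : (Finsupp.single a b : ℕ →₀ ℂ) = b • n a := by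
        simp [hn a, Finsupp.smul_single]
      rw [map_add, Finsupp.add_apply, Finsupp.add_apply, ih, mul_add]
      congr 1
      rw [hsingle, map_smul]
      cases a with
      | zero =>
        rw [hLn0, smul_zero]
        simp [hn, Finsupp.single_apply]
      | succ k =>
        rw [hLn k]
        by_cases hkj : k = j
        · subst hkj; simp [hn, Finsupp.single_apply]; ring
        · have hne : ¬ (k + 1 = j + 1) := by omega
          simp [hkj, hne, hn, Finsupp.single_apply]
  -- n 0 ∈ W from any nonzero element, by strong induction on support bound
  have key : ∀ N : ℕ, ∀ v ∈ W, v ≠ 0 → (∀ j, v j ≠ 0 → j ≤ N) → n 0 ∈ W := by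
    intro N
    induction N with
    | zero =>
      intro v hvW hv0 hbound
      have hv00 : v 0 ≠ 0 := by
        intro h0
        apply hv0
        ext j
        cases j with
        | zero => simpa using h0
        | succ m =>
          by_contra hc
          have := hbound (m + 1) hc
          omega
      have hveq : v = v 0 • n 0 := by
        ext j
        cases j with
        | zero => simp [hn 0]
        | succ m =>
          have : v (m + 1) = 0 := by
            by_contra hc
            have := hbound (m + 1) hc
            omega
          simp [hn 0, this, Finsupp.single_apply]
      obtain ⟨c, hc0, hveq'⟩ : ∃ c : ℂ, c ≠ 0 ∧ v = c • n 0 := ⟨v 0, hv00, hveq⟩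
      have : n 0 = c⁻¹ • v := by
        rw [hveq', smul_smul, inv_mul_cancel₀ hc0, one_smul]
      rw [this]
      exact W.smul_mem _ hvW
    | succ N ih =>
      intro v hvW hv0 hbound
      by_cases htop : v (N + 1) = 0
      · exact ih v hvW hv0 (fun j hj => by
          have := hbound j hj
          rcases Nat.lt_or_ge j (N + 1) with h | h
          · omega
          · exfalso; have : j = N + 1 := by omega
            exact hj (this ▸ htop))
      · have hwW : L v ∈ W := hLW v hvW
        have hwN : (L v) N = ((N : ℂ) + 1) * v (N + 1) := hLcoe v N
        have hwN0 : (L v) N ≠ 0 := by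
          rw [hwN]
          exact mul_ne_zero (Nat.cast_add_one_ne_zero N) htop
        have hw0 : L v ≠ 0 := fun h => hwN0 (by simp [h])
        refine ih (L v) hwW hw0 (fun j hj => ?_)
        by_contra hc
        push_neg at hc
        have : (L v) j = 0 := by
          rw [hLcoe]
          have : v (j + 1) = 0 := by
            by_contra hc2
            have := hbound (j + 1) hc2
            omega
          simp [this]
        exact hj this
  -- get a nonzero element of W
  obtain ⟨v, hvW, hv0⟩ : ∃ v ∈ W, v ≠ 0 := by
    by_contra h
    push_neg at h
    exact hbot (by
      rw [Submodule.eq_bot_iff]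
      exact fun x hx => h x hx)
  have hn0W : n 0 ∈ W := key (v.support.sup id) v hvW hv0 (fun j hj => by
    have : j ∈ v.support := Finsupp.mem_support_iff.mpr hj
    exact Finset.le_sup (f := id) this)
  -- all n k ∈ W by induction via H
  have hnkW : ∀ k, n k ∈ W := by
    intro k
    induction k with
    | zero => exact hn0W
    | succ m ihm =>
      have h1 : ((2 * η) : ℂ) • n (m + 1) =
          ((t : ℂ) - 1 - 2 * m) • n m - H (n m) := by
        rw [hH m]; ring_nf; abel
      have h2 : ((2 * η) : ℂ) • n (m + 1) ∈ W :=
        h1 ▸ W.sub_mem (W.smul_mem _ ihm) (hHW (n m) ihm)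
      have h3 : n (m + 1) = ((2 * η) : ℂ)⁻¹ • (((2 * η) : ℂ) • n (m + 1)) := by
        rw [smul_smul, inv_mul_cancel₀ (by simpa using hη), one_smul]
      rw [h3]
      exact W.smul_mem _ h2
  -- conclude W = ⊤
  rw [eq_top_iff]
  intro x _
  have : x = x.sum fun k c => c • n k := by
    conv_lhs => rw [← Finsupp.sum_single x]
    refine Finsupp.sum_congr (fun k hk => ?_)
    rw [hn k, Finsupp.smul_single, smul_eq_mul, mul_one]
  rw [this]
  exact Submodule.sum_mem W (fun k hk => W.smul_mem _ (hnkW k))
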